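/- arXiv:1208.4902 — 4 statements merged into one kernel-verified Lean document; each statement's English description precedes it below -/
import Mathlib

section
/- Let R be a discrete valuation ring, A a finite torsion R-module, and S, T finite submodules of A. Suppose endomorphisms φ, ψ of A satisfy φ(S) = T and ψ(T) = S. Then there exist endomorphisms φ', ψ' of A with φ'(S) = T, ψ'(T) = S, and ψ'∘φ' restricted to S equal to the identity on S. -/
/-- if endomorphisms of a finite torsion module map S onto T and
T onto S, they may be modified so that the composite is the identity on S. -/
theorem mutual_surjections_can_be_made_inverse {R A : Type*} [CommRing R] [IsDomain R]
    [IsDiscreteValuationRing R] [AddCommGroup A] [Module R A] [Finite A]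
    (htor : Module.IsTorsion R A)
    (S T : Submodule R A) (φ ψ : A →ₗ[R] A)
    (hφ : S.map φ = T) (hψ : T.map ψ = S) :
    ∃ φ' ψ' : A →ₗ[R] A,
      S.map φ' = T ∧ T.map ψ' = S ∧ ∀ s ∈ S, ψ' (φ' s) = s := by
  set g : A →ₗ[R] A := ψ ∘ₗ φ with hg
  have hgS : S.map g = S := by
    rw [hg, Submodule.map_comp, hφ, hψ]
  -- powers of g also map S onto S
  have hgSpow : ∀ k : ℕ, S.map (g ^ k) = S := by
    intro k
    induction k with
    | zero => simp only [pow_zero, Module.End.one_eq_id, Submodule.map_id]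
    | succ k ih =>
      rw [pow_succ, Module.End.mul_eq_comp, Submodule.map_comp, hgS, ih]
  -- restriction of g to S
  have hmem : ∀ x ∈ S, g x ∈ S := by
    intro x hx
    rw [← hgS]
    exact Submodule.mem_map_of_mem hx
  set f : S →ₗ[R] S := g.restrict hmem with hf
  have hfsurj : Function.Surjective f := by
    intro ⟨y, hy⟩
    rw [← hgS] at hy
    obtain ⟨x, hx, hxy⟩ := hy
    exact ⟨⟨x, hx⟩, Subtype.ext hxy⟩
  have : Finite S := Subtype.finite
  have hfbij : Function.Bijective f := Finite.surjective_iff_bijective.mp hfsurj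
  have hfin : Finite (Module.End R S) :=
    Finite.of_injective (fun h => (h : S → S)) DFunLike.coe_injective
  have hunit : IsUnit f := (Module.End.isUnit_iff f).mpr hfbij
  obtain ⟨u, hu⟩ := hunit
  have hn : u ^ orderOf u = 1 := pow_orderOf_eq_one u
  have hnpos : 0 < orderOf u := orderOf_pos u
  set n := orderOf u with hn'
  have hfn : f ^ n = 1 := by
    have := congrArg (Units.val) hn
    simpa [hu] using this
  -- relate powers of f and g
  have hpow : ∀ (k : ℕ) (s : S), ((f ^ k) s : A) = (g ^ k) (s : A) := by
    intro k
    induction k with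
    | zero => intro s; simp
    | succ k ih =>
      intro s
      rw [pow_succ', pow_succ']
      simp only [Module.End.mul_apply]
      calc ((f ((f ^ k) s) : S) : A) = g ((f ^ k) s : A) := rfl
        _ = g ((g ^ k) (s : A)) := by rw [ih s]
  -- the modified maps
  refine ⟨φ, (g ^ (n - 1)) ∘ₗ ψ, hφ, ?_, ?_⟩
  · rw [Submodule.map_comp, hψ, hgSpow]
  · intro s hs
    have h1 : ((g ^ (n - 1)) ∘ₗ ψ) (φ s) = (g ^ n) s := by
      have : (g ^ (n-1)) (g s) = (g ^ n) s := by
        rw [← Module.End.mul_apply, ← pow_succ]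
        have hn1 : n - 1 + 1 = n := by omega
        rw [hn1]
      simpa [hg] using this
    rw [h1]
    have := hpow n ⟨s, hs⟩
    rw [hfn] at this
    simpa using this.symm
end

section
/- Let A = ⊕_{α≥1} (R/pᵅR)^{f_α} be a finite module over a discrete valuation ring R with finite residue field. For a ∈ A with coordinates a_{α,i} ∈ R/pᵅR, let I(a) be the order ideal of P_f generated by the orbits (v(a_{α,i}), α) of the nonzero coordinates, where v denotes p-height in R/pᵅR. Then the height of a in A equals h(I(a)) = min{v : (v,α) ∈ I(a)} (with min ∅ = ∞), and I(pa) = I(a)¹ where I¹ = {(v,α) : (v−1,α) ∈ I}. -/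
noncomputable def pHeight {R A : Type*} [CommRing R] [AddCommGroup A] [Module R A]
    (p : R) (a : A) : ℕ∞ :=
  ⨆ (n : ℕ) (_ : ∃ y : A, a = p ^ n • y), (n : ℕ∞)

def fundLE (x y : ℕ × ℕ) : Prop := y.1 ≤ x.1 ∧ x.2 - x.1 ≤ y.2 - y.1

def Pf (f : ℕ → ℕ) : Set (ℕ × ℕ) := {x | x.1 < x.2 ∧ 0 < f x.2}

/-- The shift I¹ = {(v,α) : (v−1,α) ∈ I} (inside P_f). -/
def shiftIdeal (f : ℕ → ℕ) (I : Set (ℕ × ℕ)) : Set (ℕ × ℕ) :=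
  {x ∈ Pf f | 1 ≤ x.1 ∧ (x.1 - 1, x.2) ∈ I}

noncomputable def idealHeight (I : Set (ℕ × ℕ)) : ℕ∞ :=
  sInf ((fun x : ℕ × ℕ => (x.1 : ℕ∞)) '' I)

/-- The module A = ⊕_{α} (R/pᵅR)^{f_α}. -/
abbrev ModA (R : Type*) [CommRing R] (p : R) (f : ℕ → ℕ) :=
  DirectSum (Σ α : ℕ, Fin (f α)) (fun i => R ⧸ Ideal.span {p ^ i.1})

/-- The order ideal I(a) of P_f generated by the orbits (height(a_{α,i}), α)
of the nonzero coordinates of a. -/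
def idealOf {R : Type*} [CommRing R] (p : R) (f : ℕ → ℕ)
    (a : ModA R p f) : Set (ℕ × ℕ) :=
  {y ∈ Pf f | ∃ (i : Σ α : ℕ, Fin (f α)) (m : ℕ),
    a i ≠ 0 ∧ pHeight p (a i) = (m : ℕ∞) ∧ fundLE y (m, i.1)}

section General
variable {R M : Type*} [CommRing R] [AddCommGroup M] [Module R M] {p : R}

lemma d_mono {b : M} {m n : ℕ} (h : m ≤ n) (hd : ∃ y : M, b = p ^ n • y) :
    ∃ y : M, b = p ^ m • y := by
  obtain ⟨y, rfl⟩ := hd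
  exact ⟨p ^ (n - m) • y, by rw [← mul_smul, ← pow_add, Nat.add_sub_cancel' h]⟩


lemma le_pHeight {b : M} {n : ℕ} (h : ∃ y : M, b = p ^ n • y) : (n : ℕ∞) ≤ pHeight p b := by
  unfold pHeight
  exact le_iSup_of_le n (le_iSup_of_le h le_rfl)

lemma pHeight_le {b : M} {c : ℕ∞} (h : ∀ m : ℕ, (∃ y : M, b = p ^ m • y) → (m : ℕ∞) ≤ c) :
    pHeight p b ≤ c := by
  unfold pHeight
  exact iSup_le fun m => iSup_le fun hm => h m hm

lemma pHeight_eq_coe_iff {b : M} {n : ℕ} :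
    pHeight p b = (n : ℕ∞) ↔ (∃ y : M, b = p ^ n • y) ∧ ¬ ∃ y : M, b = p ^ (n+1) • y := by
  constructor
  · intro h
    have hub : ¬ ∃ y : M, b = p ^ (n+1) • y := by
      intro hd
      have : ((n+1 : ℕ) : ℕ∞) ≤ pHeight p b := le_pHeight hd
      rw [h] at this
      exact absurd this (by exact_mod_cast Nat.not_succ_le_self n)
    refine ⟨?_, hub⟩
    by_contra hn
    rcases Nat.eq_zero_or_pos n with rfl | hn0
    · exact hn ⟨b, by simp⟩
    have : pHeight p b ≤ ((n-1 : ℕ) : ℕ∞) := by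
      refine pHeight_le fun m hd => ?_
      have : m ≤ n - 1 := by
        by_contra hmn
        exact hn (d_mono (by omega) hd)
      exact_mod_cast this
    rw [h] at this
    have := this.trans_lt (by exact_mod_cast Nat.sub_lt hn0 one_pos : ((n-1:ℕ):ℕ∞) < (n:ℕ∞))
    exact absurd this (lt_irrefl _)
  · rintro ⟨hd, hub⟩
    refine le_antisymm (pHeight_le fun m hm => ?_) (le_pHeight hd)
    have : m ≤ n := by
      by_contra hmn
      exact hub (d_mono (by omega) hm)
    exact_mod_cast this

lemma pHeight_zero : pHeight p (0 : M) = ⊤ := by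
  have h : ∀ n : ℕ, (n : ℕ∞) ≤ pHeight p (0 : M) :=
    fun n => le_pHeight ⟨0, by simp⟩
  by_contra hne
  obtain ⟨k, hk⟩ := WithTop.ne_top_iff_exists.mp hne
  have h2 := h (k + 1)
  rw [← hk] at h2
  exact absurd (Nat.cast_le.mp h2) (by omega)

lemma exists_level {b : M} {N : ℕ} (hN : ¬ ∃ y : M, b = p ^ N • y) :
    ∃ m, (∃ y : M, b = p ^ m • y) ∧ ¬ ∃ y : M, b = p ^ (m+1) • y := by
  classical
  have hex : ∃ n, ¬ ∃ y : M, b = p ^ n • y := ⟨N, hN⟩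
  have hk : ¬ ∃ y : M, b = p ^ (Nat.find hex) • y := Nat.find_spec hex
  have hk0 : Nat.find hex ≠ 0 := fun h => hk (h ▸ ⟨b, by simp⟩)
  obtain ⟨j, hj⟩ := Nat.exists_eq_succ_of_ne_zero hk0
  rw [hj] at hk
  refine ⟨j, ?_, hk⟩
  have := Nat.find_min hex (m := j) (by omega)
  tauto

end General
set_option linter.unusedSectionVars false

section Quot
variable {R : Type*} [CommRing R] [IsDomain R] {p : R} {α : ℕ}

lemma mk_pow_smul (n : ℕ) (y : R) :
    (p ^ n) • (Ideal.Quotient.mk (Ideal.span {p ^ α}) y) = Ideal.Quotient.mk _ (p ^ n * y) := rfl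

lemma pow_smul_eq_zero {n : ℕ} (h : α ≤ n) (b : R ⧸ Ideal.span {p ^ α}) : p ^ n • b = 0 := by
  obtain ⟨y, rfl⟩ := Ideal.Quotient.mk_surjective b
  rw [mk_pow_smul]
  exact (Ideal.Quotient.eq_zero_iff_dvd _ _).mpr (dvd_mul_of_dvd_left (pow_dvd_pow p h) y)

lemma comp_lt {n : ℕ} {b : R ⧸ Ideal.span {p ^ α}} (hb : b ≠ 0)
    (hd : ∃ y : R ⧸ Ideal.span {p ^ α}, b = p ^ n • y) : n < α := by
  by_contra h
  obtain ⟨y, hy⟩ := hd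
  exact hb (hy.trans (pow_smul_eq_zero (by omega) y))

lemma key_cancel (hp : Irreducible p) (hα : 1 ≤ α) {c : R ⧸ Ideal.span {p ^ α}}
    (h0 : p • c = 0) : ∃ d : R ⧸ Ideal.span {p ^ α}, c = p ^ (α - 1) • d := by
  obtain ⟨y, rfl⟩ := Ideal.Quotient.mk_surjective c
  have h1 : (p ^ 1) • (Ideal.Quotient.mk (Ideal.span {p ^ α}) y) = 0 := by rwa [pow_one]
  rw [mk_pow_smul] at h1
  have hdvd : p ^ α ∣ p ^ 1 * y := (Ideal.Quotient.eq_zero_iff_dvd _ _).mp h1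
  have hsplit : p ^ α = p ^ 1 * p ^ (α - 1) := by rw [← pow_add]; congr 1; omega
  rw [hsplit] at hdvd
  have : p ^ (α - 1) ∣ y := by
    have hne : p ^ 1 ≠ 0 := pow_ne_zero _ hp.ne_zero
    exact (mul_dvd_mul_iff_left hne).mp hdvd
  obtain ⟨s, rfl⟩ := this
  exact ⟨Ideal.Quotient.mk _ s, (mk_pow_smul _ _).symm⟩

lemma hC1 {b : R ⧸ Ideal.span {p ^ α}} {m : ℕ}
    (hDm : ∃ y : R ⧸ Ideal.span {p ^ α}, b = p ^ m • y) :
    ∃ y : R ⧸ Ideal.span {p ^ α}, p • b = p ^ (m + 1) • y := by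
  obtain ⟨y, rfl⟩ := hDm
  exact ⟨y, by rw [← mul_smul, ← pow_succ']⟩

lemma hC_ne (hp : Irreducible p) {b : R ⧸ Ideal.span {p ^ α}} {m : ℕ} (hα : m + 1 < α)
    (hDm1 : ¬ ∃ y : R ⧸ Ideal.span {p ^ α}, b = p ^ (m + 1) • y) : p • b ≠ 0 := by
  intro h0
  obtain ⟨d, hd⟩ := key_cancel hp (by omega) h0
  exact hDm1 (d_mono (by omega) ⟨d, hd⟩)

lemma hC2 (hp : Irreducible p) {b : R ⧸ Ideal.span {p ^ α}} {m : ℕ} (hα : m + 1 < α)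
    (hDm1 : ¬ ∃ y : R ⧸ Ideal.span {p ^ α}, b = p ^ (m + 1) • y) :
    ¬ ∃ z : R ⧸ Ideal.span {p ^ α}, p • b = p ^ (m + 2) • z := by
  rintro ⟨z, hz⟩
  have h0 : p • (b - p ^ (m + 1) • z) = 0 := by
    rw [smul_sub, hz, ← mul_smul, ← pow_succ', sub_self]
  obtain ⟨d, hd⟩ := key_cancel hp (by omega) h0
  apply hDm1
  rw [sub_eq_iff_eq_add] at hd
  refine ⟨p ^ (α - 2 - m) • d + z, ?_⟩
  rw [hd, smul_add, ← mul_smul, ← pow_add]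
  have : m + 1 + (α - 2 - m) = α - 1 := by omega
  rw [this, add_comm]

end Quot

section DS
variable {R : Type*} [CommRing R] {p : R} {ι : Type*} [DecidableEq ι]
  {β : ι → Type*} [∀ i, AddCommGroup (β i)] [∀ i, Module R (β i)]

lemma ds_d_iff {a : DirectSum ι β} {n : ℕ} :
    (∃ y : DirectSum ι β, a = p ^ n • y) ↔ ∀ i, ∃ y : β i, a i = p ^ n • y := by
  classical
  constructor
  · rintro ⟨y, rfl⟩ i
    exact ⟨y i, rfl⟩
  · intro h
    refine ⟨∑ i ∈ DFinsupp.support a, DirectSum.lof R ι β i (Classical.choose (h i)), ?_⟩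
    rw [Finset.smul_sum]
    have heq : ∀ i ∈ DFinsupp.support a,
        p ^ n • DirectSum.lof R ι β i (Classical.choose (h i)) = DirectSum.of β i (a i) := by
      intro i _
      rw [← LinearMap.map_smul, ← Classical.choose_spec (h i)]
      rfl
    rw [Finset.sum_congr rfl heq, DirectSum.sum_support_of]

end DS
set_option maxHeartbeats 1000000 in
/-- the height of a equals h(I(a)), and I(pa) = I(a)¹. -/
theorem height_eq_ideal_height_and_shift {R : Type*} [CommRing R] [IsDomain R]
    [IsDiscreteValuationRing R] (p : R) (hp : Irreducible p)
    [Finite (R ⧸ Ideal.span {p})]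
    (f : ℕ → ℕ) (hf : (Function.support f).Finite) (a : ModA R p f) :
    pHeight p a = idealHeight (idealOf p f a) ∧
    idealOf p f (p • a) = shiftIdeal f (idealOf p f a) := by
  classical
  have hpai : ∀ i, (p • a) i = p • (a i) := fun i => rfl
  constructor
  · -- claim 1
    by_cases ha : a = 0
    · subst ha
      have he : idealOf p f (0 : ModA R p f) = ∅ := by
        ext x
        simp only [idealOf, Set.mem_setOf_eq, Set.mem_empty_iff_false, iff_false, not_and]
        rintro _ ⟨i, m, hne, _⟩
        exact absurd (DirectSum.zero_apply i) hne
      rw [he, pHeight_zero]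
      simp [idealHeight]
    · obtain ⟨i₀, hi₀⟩ : ∃ i : Σ α : ℕ, Fin (f α), a i ≠ 0 := by
        by_contra h
        push_neg at h
        exact ha (DFinsupp.ext fun i => h i)
      have hN : ¬ ∃ y : ModA R p f, a = p ^ (i₀.1) • y := by
        intro hd
        obtain ⟨y, hy⟩ := ds_d_iff.mp hd i₀
        exact hi₀ (hy.trans (pow_smul_eq_zero le_rfl y))
      obtain ⟨n, hDn, hDn1⟩ := exists_level (M := ModA R p f) hN
      have hpa : pHeight p a = (n : ℕ∞) := pHeight_eq_coe_iff.mpr ⟨hDn, hDn1⟩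
      obtain ⟨i₁, hi₁⟩ : ∃ i : Σ α : ℕ, Fin (f α), ¬ ∃ y : R ⧸ Ideal.span {p ^ i.1},
          a i = p ^ (n + 1) • y := by
        by_contra h
        push_neg at h
        exact hDn1 (ds_d_iff.mpr fun i => h i)
      have hai₁ : a i₁ ≠ 0 := fun h => hi₁ (h ▸ ⟨0, by rw [smul_zero]⟩)
      have hDni₁ : ∃ y : R ⧸ Ideal.span {p ^ i₁.1}, a i₁ = p ^ n • y := ds_d_iff.mp hDn i₁
      have hn_lt : n < i₁.1 := comp_lt hai₁ hDni₁
      have hheight : pHeight p (a i₁) = (n : ℕ∞) := pHeight_eq_coe_iff.mpr ⟨hDni₁, hi₁⟩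
      rw [hpa]
      apply le_antisymm
      · apply le_sInf
        rintro x ⟨⟨v, β⟩, ⟨hPf, i, m, hne, hm, hfund⟩, rfl⟩
        have hcomp := pHeight_eq_coe_iff.mp hm
        have hnm : n ≤ m := by
          by_contra hmn
          exact hcomp.2 (d_mono (by omega) (ds_d_iff.mp hDn i))
        show (n : ℕ∞) ≤ ((v, β).1 : ℕ∞)
        exact_mod_cast hnm.trans hfund.1
      · exact sInf_le ⟨(n, i₁.1), ⟨⟨hn_lt, i₁.2.pos⟩, i₁, n, hai₁, hheight,
          le_rfl, le_rfl⟩, rfl⟩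
  · -- claim 2
    ext ⟨v, β⟩
    simp only [idealOf, shiftIdeal, Set.mem_setOf_eq]
    constructor
    · rintro ⟨hPf, i, m', hne, hm', hfund⟩
      rw [hpai i] at hne hm'
      have hane : a i ≠ 0 := fun h => hne (by rw [h, smul_zero])
      have hNα : ¬ ∃ y : R ⧸ Ideal.span {p ^ i.1}, a i = p ^ i.1 • y := by
        intro hd
        obtain ⟨y, hy⟩ := hd
        exact hane (hy.trans (pow_smul_eq_zero le_rfl y))
      obtain ⟨m, hDm, hDm1⟩ := exists_level hNα
      have h1 := hC1 hDm
      have hlt : m + 1 < i.1 := comp_lt hne h1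
      have hpb : pHeight p (p • (a i)) = ((m + 1 : ℕ) : ℕ∞) :=
        pHeight_eq_coe_iff.mpr ⟨h1, hC2 hp hlt hDm1⟩
      have hm'' : m' = m + 1 := by
        have := hm'.symm.trans hpb
        exact_mod_cast this
      subst hm''
      obtain ⟨hfund1, hfund2⟩ := hfund
      obtain ⟨hvβ, hfβ⟩ := hPf
      refine ⟨⟨hvβ, hfβ⟩, by omega, ⟨by omega, hfβ⟩, i, m, hane,
        pHeight_eq_coe_iff.mpr ⟨hDm, hDm1⟩, by omega, by omega⟩
    · rintro ⟨⟨hvβ, hfβ⟩, hv1, ⟨hv'β, -⟩, i, m, hane, hm, hfund1, hfund2⟩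
      obtain ⟨hDm, hDm1⟩ := pHeight_eq_coe_iff.mp hm
      have hmlt : m < i.1 := comp_lt hane hDm
      simp only at hfund1 hfund2 hv'β
      have hm1lt : m + 1 < i.1 := by omega
      have hpbne : p • (a i) ≠ 0 := hC_ne hp hm1lt hDm1
      have h1 := hC1 hDm
      have hpb : pHeight p (p • (a i)) = ((m + 1 : ℕ) : ℕ∞) :=
        pHeight_eq_coe_iff.mpr ⟨h1, hC2 hp hm1lt hDm1⟩
      refine ⟨⟨hvβ, hfβ⟩, i, m + 1, ?_, ?_, by omega, by omega⟩
      · rw [hpai i]; exact hpbne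
      · rw [hpai i]; exact hpb
end

section
/- Let R be a discrete valuation ring with uniformizer p, and A a finitely generated torsion R-module. For elements a, b ∈ A: if h(pⁱa) ≤ h(pⁱb) for all i ≥ 0 then the map pⁱa ↦ pⁱb extends R-linearly to a well-defined height-increasing homomorphism from the cyclic submodule Ra to Rb sending a to b. (In particular, if the Ulm sequence of b dominates that of a termwise, then ra = 0 implies rb = 0 for all r ∈ R.) -/
lemma pHeight_mono_aux {R A : Type*} [CommRing R] [AddCommGroup A] [Module R A]
    (p : R) {x x' : A}
    (h : ∀ n : ℕ, (∃ y : A, x = p ^ n • y) → (∃ y : A, x' = p ^ n • y)) :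
    pHeight p x ≤ pHeight p x' := by
  refine iSup₂_le fun n hn => ?_
  exact le_iSup₂ (f := fun (n : ℕ) (_ : ∃ y : A, x' = p ^ n • y) => (n : ℕ∞)) n (h n hn)

lemma pHeight_unit_smul {R A : Type*} [CommRing R] [AddCommGroup A] [Module R A]
    (p : R) (u : Rˣ) (x : A) : pHeight p ((u : R) • x) = pHeight p x := by
  have key : ∀ (v : Rˣ) (z : A), pHeight p z ≤ pHeight p ((v : R) • z) :=
    fun v z => pHeight_mono_aux p fun n ⟨y, hy⟩ => ⟨(v : R) • y, by rw [hy, smul_comm]⟩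
  refine le_antisymm ?_ (key u x)
  have := key u⁻¹ ((u : R) • x)
  rwa [smul_smul, Units.inv_mul, one_smul] at this

lemma pHeight_zero_s18 {R A : Type*} [CommRing R] [AddCommGroup A] [Module R A]
    (p : R) : pHeight p (0 : A) = ⊤ := by
  refine le_antisymm le_top ?_
  rw [← ENat.iSup_natCast]
  exact iSup_le fun n =>
    le_iSup₂ (f := fun (n : ℕ) (_ : ∃ y : A, (0 : A) = p ^ n • y) => (n : ℕ∞)) n
      ⟨0, (smul_zero _).symm⟩

/-- if the Ulm sequence of b dominates that of a termwise, then
a ↦ b extends to a well-defined height-increasing homomorphism Ra → Rb; in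
particular ra = 0 implies rb = 0. -/
theorem cyclic_hom_of_ulm_domination {R A : Type*} [CommRing R] [IsDomain R]
    [IsDiscreteValuationRing R] [AddCommGroup A] [Module R A]
    [Module.Finite R A] (htor : Module.IsTorsion R A)
    (p : R) (hp : Irreducible p) (a b : A)
    (hdom : ∀ i : ℕ, pHeight p (p ^ i • a) ≤ pHeight p (p ^ i • b)) :
    (∀ r : R, r • a = 0 → r • b = 0) ∧
    ∃ φ : ↥(Submodule.span R ({a} : Set A)) →ₗ[R] A,
      (∀ x : ↥(Submodule.span R ({a} : Set A)), pHeight p (x : A) ≤ pHeight p (φ x)) ∧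
      φ ⟨a, Submodule.mem_span_singleton_self a⟩ = b ∧
      LinearMap.range φ = Submodule.span R ({b} : Set A) := by
  -- Step 1: some power of p kills A.
  obtain ⟨r, hrann, hr0⟩ := id
    (Submodule.annihilator_top_inter_nonZeroDivisors htor)
  have hrne : r ≠ 0 := nonZeroDivisors.ne_zero hr0
  obtain ⟨N, u, hru⟩ := IsDiscreteValuationRing.eq_unit_mul_pow_irreducible hrne hp
  have hkill : ∀ x : A, p ^ N • x = 0 := by
    intro x
    have hr : r • x = 0 := Submodule.mem_annihilator.mp hrann x Submodule.mem_top
    have : ((u⁻¹ : Rˣ) : R) • r • x = 0 := by rw [hr, smul_zero]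
    rwa [hru, smul_smul, ← mul_assoc, Units.inv_mul, one_mul] at this
  -- Step 2: nonzero elements have height ≤ N.
  have hheight_ne_top : ∀ x : A, pHeight p x = ⊤ → x = 0 := by
    intro x hx
    by_contra hx0
    have hle : pHeight p x ≤ (N : ℕ∞) := by
      refine iSup₂_le fun n ⟨y, hy⟩ => ?_
      by_contra hlt
      push_neg at hlt
      have hNn : N ≤ n := by exact_mod_cast le_of_lt hlt
      apply hx0
      rw [hy, ← Nat.sub_add_cancel hNn, pow_add, mul_comm, mul_smul, hkill]
    rw [hx] at hle
    exact (lt_irrefl _ (lt_of_le_of_lt hle (WithTop.coe_lt_top N))).elim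
  -- Step 3: the annihilation statement via p-powers.
  have hpk : ∀ k : ℕ, p ^ k • a = 0 → p ^ k • b = 0 := by
    intro k hk
    apply hheight_ne_top
    refine le_antisymm le_top ?_
    calc (⊤ : ℕ∞) = pHeight p (p ^ k • a) := by rw [hk, pHeight_zero_s18]
      _ ≤ pHeight p (p ^ k • b) := hdom k
  have hann : ∀ r : R, r • a = 0 → r • b = 0 := by
    intro s hs
    rcases eq_or_ne s 0 with rfl | hs0
    · simp
    obtain ⟨k, v, rfl⟩ := IsDiscreteValuationRing.eq_unit_mul_pow_irreducible hs0 hp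
    rw [mul_smul] at hs ⊢
    have : p ^ k • a = 0 := by
      have := congrArg (fun z => ((v⁻¹ : Rˣ) : R) • z) hs
      simpa [smul_smul] using this
    rw [hpk k this, smul_zero]
  refine ⟨hann, ?_⟩
  -- Step 4: the height comparison for multiples.
  have hsm : ∀ s : R, pHeight p (s • a) ≤ pHeight p (s • b) := by
    intro s
    rcases eq_or_ne s 0 with rfl | hs0
    · simp
    obtain ⟨k, v, rfl⟩ := IsDiscreteValuationRing.eq_unit_mul_pow_irreducible hs0 hp
    rw [mul_smul, mul_smul, pHeight_unit_smul, pHeight_unit_smul]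
    exact hdom k
  -- Step 5: construct φ.
  have hle : Ideal.torsionOf R A a ≤ LinearMap.ker (LinearMap.toSpanSingleton R A b) := by
    intro s hs
    exact LinearMap.mem_ker.mpr (hann s (Ideal.mem_torsionOf_iff a s |>.mp hs))
  set e := Ideal.quotTorsionOfEquivSpanSingleton R A a
  set ψ := Submodule.liftQ (Ideal.torsionOf R A a) (LinearMap.toSpanSingleton R A b) hle
  refine ⟨ψ ∘ₗ e.symm.toLinearMap, ?_, ?_, ?_⟩
  · -- key computation: φ ⟨s • a, _⟩ = s • b
    intro x
    obtain ⟨x, hx⟩ := x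
    obtain ⟨s, rfl⟩ := Submodule.mem_span_singleton.mp hx
    have he : e.symm ⟨s • a, hx⟩ = Submodule.Quotient.mk s := by
      rw [LinearEquiv.symm_apply_eq]
      exact (Ideal.quotTorsionOfEquivSpanSingleton_apply_mk a s).trans rfl
    show pHeight p (s • a) ≤ pHeight p (ψ (e.symm ⟨s • a, hx⟩))
    rw [he]
    exact hsm s
  · have he : e.symm ⟨a, Submodule.mem_span_singleton_self a⟩ =
        Submodule.Quotient.mk 1 := by
      rw [LinearEquiv.symm_apply_eq]
      exact Subtype.ext (one_smul R a).symm
    show ψ (e.symm ⟨a, Submodule.mem_span_singleton_self a⟩) = b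
    rw [he]
    show (LinearMap.toSpanSingleton R A b) 1 = b
    simp [LinearMap.toSpanSingleton]
  · apply le_antisymm
    · rintro x ⟨⟨y, hy⟩, rfl⟩
      obtain ⟨s, rfl⟩ := Submodule.mem_span_singleton.mp hy
      have he : e.symm ⟨s • a, hy⟩ = Submodule.Quotient.mk s := by
        rw [LinearEquiv.symm_apply_eq]
        exact (Ideal.quotTorsionOfEquivSpanSingleton_apply_mk a s).trans rfl
      show ψ (e.symm ⟨s • a, hy⟩) ∈ _
      rw [he]
      show s • b ∈ Submodule.span R ({b} : Set A)
      exact Submodule.smul_mem _ s (Submodule.mem_span_singleton_self b)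
    · rw [Submodule.span_le, Set.singleton_subset_iff]
      refine ⟨⟨a, Submodule.mem_span_singleton_self a⟩, ?_⟩
      have he : e.symm ⟨a, Submodule.mem_span_singleton_self a⟩ =
          Submodule.Quotient.mk 1 := by
        rw [LinearEquiv.symm_apply_eq]
        exact Subtype.ext (one_smul R a).symm
      show ψ (e.symm ⟨a, Submodule.mem_span_singleton_self a⟩) = b
      rw [he]
      show (LinearMap.toSpanSingleton R A b) 1 = b
      simp [LinearMap.toSpanSingleton]
end

section
/- Let R be a discrete valuation ring and A a finite torsion R-module of exponent p^k. Elements a, b ∈ A satisfy: a and b degenerate to each other (via endomorphisms of A) if and only if h(pⁱa) = h(pⁱb) for all 0 ≤ i ≤ k. -/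
open DirectSum

section Aux

variable {R : Type*} [CommRing R]

lemma le_pHeight_s19 {A : Type*} [AddCommGroup A] [Module R A] {p : R} {a : A} {n : ℕ}
    (h : ∃ y : A, a = p ^ n • y) : (n : ℕ∞) ≤ pHeight p a :=
  le_iSup₂ (f := fun (n : ℕ) (_ : ∃ y : A, a = p ^ n • y) => (n : ℕ∞)) n h

lemma pHeight_le_s19 {A : Type*} [AddCommGroup A] [Module R A] {p : R} {a : A} {C : ℕ∞}
    (h : ∀ n : ℕ, (∃ y : A, a = p ^ n • y) → (n : ℕ∞) ≤ C) : pHeight p a ≤ C :=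
  iSup₂_le h

lemma pHeight_le_map {A B : Type*} [AddCommGroup A] [Module R A] [AddCommGroup B]
    [Module R B] (p : R) (f : A →ₗ[R] B) (a : A) : pHeight p a ≤ pHeight p (f a) := by
  refine pHeight_le_s19 fun n hn => ?_
  obtain ⟨y, rfl⟩ := hn
  exact le_pHeight_s19 ⟨f y, by rw [map_smul]⟩

lemma pHeight_equiv {A B : Type*} [AddCommGroup A] [Module R A] [AddCommGroup B]
    [Module R B] (p : R) (f : A ≃ₗ[R] B) (a : A) : pHeight p (f a) = pHeight p a := by
  refine le_antisymm ?_ (pHeight_le_map p (f : A →ₗ[R] B) a)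
  have := pHeight_le_map p (f.symm : B →ₗ[R] A) (f a)
  simpa using this

variable [IsDomain R] [IsDiscreteValuationRing R] {p : R}

/-- Every element of `R ⧸ (R ∙ p ^ m)` is killed by `p ^ m`. -/
lemma quot_pow_smul_zero {m : ℕ} (x : R ⧸ (R ∙ p ^ m)) : p ^ m • x = 0 := by
  obtain ⟨r, rfl⟩ := Submodule.Quotient.mk_surjective _ x
  rw [← Submodule.Quotient.mk_smul, Submodule.Quotient.mk_eq_zero]
  exact Submodule.mem_span_singleton.mpr ⟨r, by rw [smul_eq_mul, smul_eq_mul, mul_comm]⟩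

/-- Structure of nonzero elements of `R ⧸ (R ∙ p ^ m)`. -/
lemma quot_struct (hp : Irreducible p) {m : ℕ} {x : R ⧸ (R ∙ p ^ m)} (hx : x ≠ 0) :
    ∃ (c : ℕ) (u : Rˣ), c < m ∧ x = Submodule.Quotient.mk ((u : R) * p ^ c) := by
  obtain ⟨r, rfl⟩ := Submodule.Quotient.mk_surjective _ x
  have hr0 : r ≠ 0 := by
    rintro rfl
    exact hx (by simp)
  obtain ⟨c, u, rfl⟩ := IsDiscreteValuationRing.eq_unit_mul_pow_irreducible hr0 hp
  refine ⟨c, u, ?_, rfl⟩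
  by_contra hcm
  push_neg at hcm
  apply hx
  rw [Submodule.Quotient.mk_eq_zero]
  exact Submodule.mem_span_singleton.mpr
    ⟨(u : R) * p ^ (c - m), by rw [smul_eq_mul, mul_assoc, ← pow_add, Nat.sub_add_cancel hcm]⟩

/-- A hom between cyclic quotients with prescribed values. -/
lemma exists_cyclic_hom {el ej c d : ℕ} (u u' : Rˣ) (h1 : c ≤ d) (h2 : ej + c ≤ el + d) :
    ∃ f : (R ⧸ (R ∙ p ^ el)) →ₗ[R] (R ⧸ (R ∙ p ^ ej)),
      f (Submodule.Quotient.mk ((u : R) * p ^ c))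
        = Submodule.Quotient.mk ((u' : R) * p ^ d) := by
  set t : R := (u' : R) * (↑u⁻¹ : R) * p ^ (d - c) with ht
  have hcond : (R ∙ p ^ el) ≤ (R ∙ p ^ ej).comap (LinearMap.toSpanSingleton R R t) := by
    rw [Submodule.span_singleton_le_iff_mem, Submodule.mem_comap]
    refine Submodule.mem_span_singleton.mpr
      ⟨(u' : R) * (↑u⁻¹ : R) * p ^ (el + (d - c) - ej), ?_⟩
    have harith : el + (d - c) - ej + ej = el + (d - c) := by omega
    simp only [LinearMap.toSpanSingleton_apply, smul_eq_mul, ht]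
    rw [mul_assoc, ← pow_add, harith, pow_add]
    ring
  refine ⟨Submodule.mapQ _ _ (LinearMap.toSpanSingleton R R t) hcond, ?_⟩
  rw [Submodule.mapQ_apply]
  congr 1
  simp only [LinearMap.toSpanSingleton_apply, smul_eq_mul, ht]
  have : (u : R) * p ^ c * ((u' : R) * (↑u⁻¹ : R) * p ^ (d - c))
      = ((u : R) * (↑u⁻¹ : R)) * ((u' : R) * p ^ (c + (d - c))) := by ring
  rw [this, Nat.add_sub_cancel' h1, Units.mul_inv, one_mul]

variable {ι : Type*} [Fintype ι] [DecidableEq ι] {e : ι → ℕ}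

/-- If a component of `x` is nonzero then the height of `x` is less than the
corresponding exponent. -/
lemma height_lt_of_component_ne (p : R) {x : ⨁ j, R ⧸ (R ∙ p ^ e j)} {j : ι}
    (hj : x j ≠ 0) : pHeight p x < (e j : ℕ∞) := by
  have hej : 0 < e j := by
    rcases Nat.eq_zero_or_pos (e j) with h0 | h
    · exfalso
      have hsub : Subsingleton (R ⧸ (R ∙ p ^ e j)) := by
        rw [Submodule.Quotient.subsingleton_iff, h0, pow_zero]
        exact Ideal.span_singleton_one
      exact hj (Subsingleton.elim _ _)
    · exact h
  have hle : pHeight p x ≤ ((e j - 1 : ℕ) : ℕ∞) := by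
    refine pHeight_le_s19 fun n hn => ?_
    obtain ⟨y, rfl⟩ := hn
    refine Nat.cast_le.mpr ?_
    by_contra hlt
    push_neg at hlt
    apply hj
    rw [DFinsupp.smul_apply]
    have h2 : p ^ n • y j = p ^ (n - e j) • (p ^ (e j) • y j) := by
      rw [← mul_smul, ← pow_add, Nat.sub_add_cancel (by omega : e j ≤ n)]
    rw [h2, quot_pow_smul_zero, smul_zero]
  exact lt_of_le_of_lt hle (Nat.cast_lt.mpr (by omega))

/-- If `x` is not divisible by `p ^ n`, some component is not divisible. -/
lemma exists_component_not_div {p : R} {x : ⨁ j, R ⧸ (R ∙ p ^ e j)} {n : ℕ}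
    (h : ¬ ∃ y, x = p ^ n • y) :
    ∃ l : ι, ¬ ∃ z : R ⧸ (R ∙ p ^ e l), x l = p ^ n • z := by
  by_contra hall
  push_neg at hall
  apply h
  choose z hz using hall
  refine ⟨∑ l, DirectSum.lof R ι (fun j => R ⧸ (R ∙ p ^ e j)) l (z l), ?_⟩
  rw [Finset.smul_sum]
  have : ∀ l ∈ Finset.univ, p ^ n • DirectSum.lof R ι (fun j => R ⧸ (R ∙ p ^ e j)) l (z l)
      = DirectSum.of (fun j => R ⧸ (R ∙ p ^ e j)) l (x l) := by
    intro l _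
    rw [← map_smul, ← hz l]
    rfl
  rw [Finset.sum_congr rfl this, DirectSum.sum_univ_of]

/-- Key construction: in a direct sum of cyclic modules, if the Ulm sequence of `a`
is dominated by that of `b`, there is an endomorphism sending `a` to `b`. -/
lemma exists_hom_directSum (hp : Irreducible p) (e : ι → ℕ) (a b : ⨁ j, R ⧸ (R ∙ p ^ e j))
    (hle : ∀ i : ℕ, pHeight p (p ^ i • a) ≤ pHeight p (p ^ i • b)) :
    ∃ φ : (⨁ j, R ⧸ (R ∙ p ^ e j)) →ₗ[R] (⨁ j, R ⧸ (R ∙ p ^ e j)), φ a = b := by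
  suffices h : ∀ j : ι, ∃ φj : (⨁ j, R ⧸ (R ∙ p ^ e j)) →ₗ[R] (⨁ j, R ⧸ (R ∙ p ^ e j)),
      φj a = DirectSum.lof R ι (fun j => R ⧸ (R ∙ p ^ e j)) j (b j) by
    choose φ hφ using h
    refine ⟨∑ j, φ j, ?_⟩
    rw [LinearMap.sum_apply, Finset.sum_congr rfl (fun j _ => hφ j)]
    exact DirectSum.sum_univ_of b
  intro j
  by_cases hbj : b j = 0
  · exact ⟨0, by rw [LinearMap.zero_apply, hbj, map_zero]⟩
  obtain ⟨d, u', hd, hbj_eq⟩ := quot_struct hp hbj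
  set i := e j - d - 1 with hi
  have hdi : d + i + 1 = e j := by omega
  -- `p ^ i • b` has nonzero `j`-th component
  have hpb : (p ^ i • b) j ≠ 0 := by
    rw [DFinsupp.smul_apply, hbj_eq, ← Submodule.Quotient.mk_smul]
    intro hz
    rw [Submodule.Quotient.mk_eq_zero, Submodule.mem_span_singleton] at hz
    obtain ⟨r, hr⟩ := hz
    rw [smul_eq_mul, smul_eq_mul] at hr
    have h3 : (u' : R) * p ^ (d + i) = p ^ e j * r := by
      rw [mul_comm (p ^ e j) r, hr, pow_add]
      ring
    have hdvd : (p : R) ^ e j ∣ (u' : R) * p ^ (d + i) := ⟨r, h3⟩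
    have h4 : (p : R) ^ e j ∣ p ^ (d + i) := Units.dvd_mul_left.mp hdvd
    have h5 := (pow_dvd_pow_iff hp.ne_zero hp.not_isUnit).mp h4
    omega
  have h1 : pHeight p (p ^ i • a) < (e j : ℕ∞) :=
    lt_of_le_of_lt (hle i) (height_lt_of_component_ne p hpb)
  have h2 : ¬ ∃ y, p ^ i • a = p ^ (e j) • y := fun hy =>
    absurd (le_pHeight_s19 hy) (not_le.mpr h1)
  obtain ⟨l, hl⟩ := exists_component_not_div h2
  have hal : a l ≠ 0 := by
    intro h0
    exact hl ⟨0, by rw [DFinsupp.smul_apply, h0, smul_zero, smul_zero]⟩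
  obtain ⟨c, u, hc, hal_eq⟩ := quot_struct hp hal
  -- c ≤ d
  have hcd : c ≤ d := by
    by_contra hcd
    push_neg at hcd
    apply hl
    refine ⟨Submodule.Quotient.mk ((u : R) * p ^ (c + i - e j)), ?_⟩
    rw [DFinsupp.smul_apply, hal_eq, ← Submodule.Quotient.mk_smul, ← Submodule.Quotient.mk_smul]
    congr 1
    simp only [smul_eq_mul]
    rw [← mul_assoc, mul_comm (p ^ i), mul_assoc, ← pow_add, ← mul_assoc,
      mul_comm (p ^ (e j)), mul_assoc, ← pow_add]
    congr 2
    omega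
  -- c + i < e l
  have hcl : c + i < e l := by
    by_contra hcl
    push_neg at hcl
    apply hl
    refine ⟨0, ?_⟩
    rw [DFinsupp.smul_apply, hal_eq, ← Submodule.Quotient.mk_smul, smul_zero]
    rw [Submodule.Quotient.mk_eq_zero]
    refine Submodule.mem_span_singleton.mpr ⟨(u : R) * p ^ (c + i - e l), ?_⟩
    simp only [smul_eq_mul]
    rw [mul_assoc, ← pow_add, mul_comm (p ^ i), mul_assoc, ← pow_add]
    congr 2
    omega
  have h2' : e j + c ≤ e l + d := by omega
  obtain ⟨f, hf⟩ := exists_cyclic_hom (p := p) u u' hcd h2'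
  refine ⟨(DirectSum.lof R ι (fun j => R ⧸ (R ∙ p ^ e j)) j).comp
    (f.comp (DirectSum.component R ι (fun j => R ⧸ (R ∙ p ^ e j)) l)), ?_⟩
  simp only [LinearMap.comp_apply]
  rw [← DirectSum.apply_eq_component, hal_eq, hf, ← hbj_eq]

end Aux

/-- in a finite module of exponent p^k, two elements degenerate
to each other iff their Ulm sequences agree up to index k. -/
theorem mutual_degeneration_iff_ulm_eq {R A : Type*} [CommRing R] [IsDomain R]
    [IsDiscreteValuationRing R] [AddCommGroup A] [Module R A] [Finite A]
    (p : R) (hp : Irreducible p) (k : ℕ) (hbd : ∀ x : A, p ^ k • x = 0)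
    (a b : A) :
    ((∃ φ : A →ₗ[R] A, φ a = b) ∧ (∃ ψ : A →ₗ[R] A, ψ b = a)) ↔
    (∀ i : ℕ, i ≤ k → pHeight p (p ^ i • a) = pHeight p (p ^ i • b)) := by
  constructor
  · rintro ⟨⟨φ, hφ⟩, ⟨ψ, hψ⟩⟩ i _
    refine le_antisymm ?_ ?_
    · have := pHeight_le_map p φ (p ^ i • a)
      rwa [map_smul, hφ] at this
    · have := pHeight_le_map p ψ (p ^ i • b)
      rwa [map_smul, hψ] at this
  · intro h
    -- extend to all indices
    have hall : ∀ i : ℕ, pHeight p (p ^ i • a) = pHeight p (p ^ i • b) := by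
      intro i
      rcases le_or_gt i k with hik | hik
      · exact h i hik
      · have hza : p ^ i • a = 0 := by
          rw [show i = (i - k) + k by omega, pow_add, mul_smul, hbd a, smul_zero]
        have hzb : p ^ i • b = 0 := by
          rw [show i = (i - k) + k by omega, pow_add, mul_smul, hbd b, smul_zero]
        rw [hza, hzb]
    -- use the structure theorem
    have htor : Module.IsTorsion R A := by
      intro x
      refine ⟨⟨p ^ k, mem_nonZeroDivisors_of_ne_zero (pow_ne_zero _ hp.ne_zero)⟩, hbd x⟩
    let e₀ : ULift.{u_1, u_2} A ≃ₗ[R] A := ULift.moduleEquiv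
    have htor' : Module.IsTorsion R (ULift.{u_1, u_2} A) := by
      rintro x
      refine ⟨⟨p ^ k, mem_nonZeroDivisors_of_ne_zero (pow_ne_zero _ hp.ne_zero)⟩, ?_⟩
      rw [Submonoid.smul_def]
      refine e₀.injective ?_
      rw [map_smul, map_zero]
      exact hbd (e₀ x)
    obtain ⟨ι, fι, q, hq, e, ⟨g0'⟩⟩ := Module.equiv_directSum_of_isTorsion htor'
    let g0 := e₀.symm.trans g0'
    haveI := fι
    haveI : DecidableEq ι := Classical.decEq ι
    have hspan : ∀ i : ι, (R ∙ q i ^ e i) = (R ∙ p ^ e i) := by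
      intro i
      have hassoc : Associated (q i) p :=
        IsDiscreteValuationRing.associated_of_irreducible R (hq i) hp
      exact Ideal.span_singleton_eq_span_singleton.mpr (hassoc.pow_pow : Associated (q i ^ e i) (p ^ e i))
    let eq1 : (⨁ i : ι, R ⧸ (R ∙ q i ^ e i)) ≃ₗ[R] (⨁ i : ι, R ⧸ (R ∙ p ^ e i)) :=
      DFinsupp.mapRange.linearEquiv fun i => Submodule.quotEquivOfEq _ _ (hspan i)
    let g : A ≃ₗ[R] (⨁ i : ι, R ⧸ (R ∙ p ^ e i)) := g0.trans eq1
    have key : ∀ (x y : A), (∀ i : ℕ, pHeight p (p ^ i • x) ≤ pHeight p (p ^ i • y)) →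
        ∃ φ : A →ₗ[R] A, φ x = y := by
      intro x y hxy
      have hle' : ∀ i : ℕ, pHeight p (p ^ i • g x) ≤ pHeight p (p ^ i • g y) := by
        intro i
        rw [← map_smul, ← map_smul, pHeight_equiv, pHeight_equiv]
        exact hxy i
      obtain ⟨φ', hφ'⟩ := exists_hom_directSum hp e (g x) (g y) hle'
      refine ⟨((g.symm : _ →ₗ[R] A).comp φ').comp (g : A →ₗ[R] _), ?_⟩
      simp only [LinearMap.comp_apply, LinearEquiv.coe_coe]
      rw [hφ', LinearEquiv.symm_apply_apply]
    exact ⟨key a b fun i => le_of_eq (hall i), key b a fun i => ge_of_eq (hall i)⟩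
end
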